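/- For every irrational α ∈ (0,1), every 1 ≤ p < ∞, and every positive integer n, the Bishop-type operator T_{φ_n,α} on L^p[0,1) defined by (T_{φ_n,α} f)(t) = φ_n(t) f({t+α}), where φ_n(t) = t·1_{[1/n,1)}(t), is nilpotent; consequently T_α is the norm limit of nilpotent operators. -/

import Mathlib

open MeasureTheory Real ENNReal

/-- Lebesgue measure restricted to `[0,1)`. -/
noncomputable def μ01 : Measure ℝ := volume.restrict (Set.Ico (0:ℝ) 1)

/-- The truncated symbol `φₙ(t) = t·1_{[1/n,1)}(t)`. -/
noncomputable def phiTrunc (n : ℕ) (t : ℝ) : ℝ :=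
  if 1/(n:ℝ) ≤ t ∧ t < 1 then t else 0

section Aux

lemma fract_fract_add (x y : ℝ) : Int.fract (Int.fract x + y) = Int.fract (x + y) := by
  have h : x + y = (Int.fract x + y) + (⌊x⌋ : ℤ) := by rw [Int.fract]; ring
  rw [h, Int.fract_add_intCast]

lemma fract_add_fract (x y : ℝ) : Int.fract (x + Int.fract y) = Int.fract (x + y) := by
  have h : x + y = (x + Int.fract y) + (⌊y⌋ : ℤ) := by rw [Int.fract]; ring
  rw [h, Int.fract_add_intCast]

lemma fract_fract_add_fract (x y : ℝ) :
    Int.fract (Int.fract x + Int.fract y) = Int.fract (x + y) := by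
  rw [fract_fract_add, fract_add_fract]

lemma fract_sub_fract (x y : ℝ) :
    Int.fract (Int.fract x - Int.fract y) = Int.fract (x - y) := by
  have h : x - y = (Int.fract x - Int.fract y) + ((⌊x⌋ - ⌊y⌋ : ℤ) : ℝ) := by
    push_cast
    rw [Int.fract, Int.fract]; ring
  rw [h, Int.fract_add_intCast]

lemma fract_nat_mul_ne_zero {α : ℝ} (hα : Irrational α) {d : ℕ} (hd : 1 ≤ d) :
    Int.fract ((d : ℝ) * α) ≠ 0 := by
  intro h
  have h2 : (d : ℝ) * α = (⌊(d : ℝ) * α⌋ : ℤ) := by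
    unfold Int.fract at h
    linarith [h]
  exact (hα.natCast_mul (by omega)).ne_int _ h2

lemma exists_fract_small_or_large {α : ℝ} (hα : Irrational α) {ε : ℝ} (hε : 0 < ε) :
    ∃ d : ℕ, 1 ≤ d ∧ (Int.fract ((d:ℝ) * α) < ε ∨ 1 - ε < Int.fract ((d:ℝ) * α)) := by
  obtain ⟨N, hN⟩ := exists_nat_gt (1/ε)
  have hN0 : 0 < (N:ℝ) := lt_trans (by positivity) hN
  have hNε : 1/(N:ℝ) < ε := by
    rw [div_lt_iff₀ hN0]
    rw [div_lt_iff₀ hε] at hN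
    linarith
  have maps : ∀ j ∈ Finset.range (N+1),
      ⌊(N:ℝ) * Int.fract ((j:ℝ) * α)⌋₊ ∈ Finset.range N := by
    intro j _
    simp only [Finset.mem_range]
    rw [Nat.floor_lt (mul_nonneg hN0.le (Int.fract_nonneg _))]
    nlinarith [Int.fract_lt_one ((j:ℝ)*α), Int.fract_nonneg ((j:ℝ)*α)]
  obtain ⟨j, hj, k, hk, hjk, he⟩ :=
    Finset.exists_ne_map_eq_of_card_lt_of_maps_to (by simp) maps
  have main : ∀ j k : ℕ, j < k →
      ⌊(N:ℝ) * Int.fract ((j:ℝ) * α)⌋₊ = ⌊(N:ℝ) * Int.fract ((k:ℝ) * α)⌋₊ →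
      ∃ d : ℕ, 1 ≤ d ∧ (Int.fract ((d:ℝ) * α) < ε ∨ 1 - ε < Int.fract ((d:ℝ) * α)) := by
    intro j k hlt hfl
    set u := Int.fract ((k:ℝ) * α) with hu
    set v := Int.fract ((j:ℝ) * α) with hv
    have habs : u - v < 1/N ∧ v - u < 1/N := by
      have h1 : (0:ℝ) ≤ (N:ℝ) * v := mul_nonneg hN0.le (Int.fract_nonneg _)
      have h2 : (0:ℝ) ≤ (N:ℝ) * u := mul_nonneg hN0.le (Int.fract_nonneg _)
      have f1 : ((⌊(N:ℝ) * v⌋₊ : ℝ)) ≤ (N:ℝ) * v := Nat.floor_le h1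
      have f2 : ((⌊(N:ℝ) * u⌋₊ : ℝ)) ≤ (N:ℝ) * u := Nat.floor_le h2
      have g1 : (N:ℝ) * v < ⌊(N:ℝ) * v⌋₊ + 1 := Nat.lt_floor_add_one _
      have g2 : (N:ℝ) * u < ⌊(N:ℝ) * u⌋₊ + 1 := Nat.lt_floor_add_one _
      have heq : ((⌊(N:ℝ) * v⌋₊ : ℝ)) = ((⌊(N:ℝ) * u⌋₊ : ℝ)) := by rw [hfl]
      constructor <;> (rw [lt_div_iff₀ hN0]; nlinarith)
    refine ⟨k - j, by omega, ?_⟩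
    have hcast : ((k - j : ℕ) : ℝ) * α = (k:ℝ) * α - (j:ℝ) * α := by
      rw [Nat.cast_sub hlt.le]; ring
    have hfr : Int.fract (((k - j : ℕ) : ℝ) * α) = Int.fract (u - v) := by
      rw [hcast, ← fract_sub_fract]
    have hne : u - v ≠ 0 := by
      intro h0
      have h00 : Int.fract (((k - j : ℕ) : ℝ) * α) = 0 := by
        rw [hfr, h0, Int.fract_zero]
      exact fract_nat_mul_ne_zero hα (by omega) h00
    have hub : u < 1 := Int.fract_lt_one _
    have hvb : v < 1 := Int.fract_lt_one _
    have hu0 : 0 ≤ u := Int.fract_nonneg _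
    have hv0 : 0 ≤ v := Int.fract_nonneg _
    rcases lt_or_gt_of_ne hne with hneg | hpos
    · right
      have hfe : Int.fract (u - v) = u - v + 1 := by
        rw [← Int.fract_add_one (u - v)]
        exact Int.fract_eq_self.2 ⟨by linarith, by linarith⟩
      rw [hfr, hfe]
      linarith [habs.2]
    · left
      have hfe : Int.fract (u - v) = u - v := Int.fract_eq_self.2 ⟨by linarith, by linarith⟩
      rw [hfr, hfe]
      linarith [habs.1]
  rcases lt_or_gt_of_ne hjk with h | h
  · exact main j k h he
  · exact main k j h he.symm

lemma exists_fract_small {α : ℝ} (hα : Irrational α) {ε : ℝ} (hε : 0 < ε) :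
    ∃ d : ℕ, 1 ≤ d ∧ Int.fract ((d:ℝ) * α) < ε := by
  obtain ⟨d, hd1, hcase⟩ := exists_fract_small_or_large hα hε
  rcases hcase with hsmall | hlarge
  · exact ⟨d, hd1, hsmall⟩
  · set β := Int.fract ((d:ℝ) * α) with hβ
    have hβ1 : β < 1 := Int.fract_lt_one _
    set γ := 1 - β with hγ
    have hγ0 : 0 < γ := by simp [hγ]; linarith
    have hγε : γ < ε := by simp [hγ]; linarith
    by_contra hcon
    push_neg at hcon
    have claim : ∀ j : ℕ, Int.fract ((((j+1)*d : ℕ) : ℝ) * α) ≤ 1 - (j+1) * γ := by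
      intro j
      induction j with
      | zero => simp [hγ]; exact hβ.symm.le
      | succ i ih =>
        have hkey : ((((i+1+1)*d : ℕ) : ℝ) * α) = ((((i+1)*d : ℕ) : ℝ) * α) + ((d:ℕ):ℝ) * α := by
          push_cast; ring
        set w := Int.fract ((((i+1)*d : ℕ) : ℝ) * α) with hw
        have hwε : ε ≤ w := hcon _ (by nlinarith [hd1])
        have hw1 : w < 1 := Int.fract_lt_one _
        have h2 : Int.fract ((((i+1+1)*d : ℕ) : ℝ) * α) = Int.fract (w + β) := by
          rw [hkey, ← fract_fract_add_fract]
        have hsum : w + β = (w - γ) + 1 := by rw [hγ]; ring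
        have hfe : Int.fract (w + β) = w - γ := by
          rw [hsum, Int.fract_add_one]
          exact Int.fract_eq_self.2 ⟨by linarith, by linarith⟩
        have hres : Int.fract ((((i+1+1)*d : ℕ) : ℝ) * α) = w - γ := by rw [h2, hfe]
        rw [hres]
        push_cast
        linarith
    obtain ⟨M, hM⟩ := exists_nat_gt (1/γ)
    have hMb := claim M
    have hf0 : (0:ℝ) ≤ Int.fract ((((M+1)*d : ℕ) : ℝ) * α) := Int.fract_nonneg _
    have hbig : 1 < ((M:ℝ) + 1) * γ := by
      rw [div_lt_iff₀ hγ0] at hM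
      nlinarith
    linarith

lemma key_orbit {α : ℝ} (hα : Irrational α) {ε : ℝ} (hε : 0 < ε) :
    ∃ m : ℕ, 1 ≤ m ∧ ∀ t : ℝ, 0 ≤ t → t < 1 →
      ∃ j : ℕ, j < m ∧ Int.fract (t + (j:ℝ) * α) < ε := by
  obtain ⟨d, hd1, hdε⟩ := exists_fract_small hα hε
  set β := Int.fract ((d:ℝ) * α) with hβ
  have hβ0 : 0 < β :=
    lt_of_le_of_ne (Int.fract_nonneg _) (Ne.symm (fract_nat_mul_ne_zero hα hd1))
  have hβ1 : β < 1 := Int.fract_lt_one _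
  obtain ⟨M, hM⟩ := exists_nat_gt (1/β)
  refine ⟨M * d + 1, by omega, fun t ht0 ht1 => ?_⟩
  by_contra hcon
  push_neg at hcon
  have claim : ∀ i : ℕ, i ≤ M → Int.fract (t + ((i*d : ℕ) : ℝ) * α) = t + i * β := by
    intro i
    induction i with
    | zero => intro _; simp [Int.fract_eq_self.2 ⟨ht0, ht1⟩]
    | succ i ih =>
      intro hiM
      have hii := ih (by omega)
      have hprev1 : t + (i:ℝ) * β < 1 := by
        rw [← hii]; exact Int.fract_lt_one _
      have hkey : t + ((((i+1)*d : ℕ)) : ℝ) * α = (t + ((i*d : ℕ) : ℝ) * α) + ((d:ℝ) * α) := by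
        push_cast; ring
      have h2 : Int.fract (t + ((((i+1)*d : ℕ)) : ℝ) * α) = Int.fract ((t + i * β) + β) := by
        rw [hkey, ← fract_fract_add_fract, hii]
      by_cases hlt : t + ((i:ℝ)+1) * β < 1
      · rw [h2]
        push_cast
        rw [show t + (i:ℝ)*β + β = t + ((i:ℝ)+1)*β by ring]
        exact Int.fract_eq_self.2 ⟨by nlinarith, hlt⟩
      · exfalso
        push_neg at hlt
        have hval : Int.fract ((t + i * β) + β) = t + ((i:ℝ)+1)*β - 1 := by
          rw [show (t + (i:ℝ) * β) + β = (t + ((i:ℝ)+1)*β - 1) + 1 by ring, Int.fract_add_one]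
          exact Int.fract_eq_self.2 ⟨by linarith, by linarith⟩
        have hsmall : Int.fract (t + ((((i+1)*d : ℕ)) : ℝ) * α) < ε := by
          rw [h2, hval]; linarith
        have hjlt : (i+1)*d < M*d+1 := by
          have : (i+1)*d ≤ M*d := Nat.mul_le_mul_right d hiM
          omega
        have hbig := hcon ((i+1)*d) hjlt
        linarith
  have hMM := claim M le_rfl
  have h1 : t + (M:ℝ) * β < 1 := by rw [← hMM]; exact Int.fract_lt_one _
  rw [div_lt_iff₀ hβ0] at hM
  nlinarith

lemma measurePreserving_fractAdd_core {c : ℝ} (hc0 : 0 ≤ c) (hc1 : c < 1) :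
    MeasurePreserving (fun t : ℝ => Int.fract (t + c)) μ01 μ01 := by
  have hg : Measurable fun t : ℝ => Int.fract (t + c) := (measurable_id.add_const c).fract
  refine ⟨hg, ?_⟩
  refine Measure.ext fun s hs => ?_
  rw [Measure.map_apply hg hs]
  unfold μ01
  rw [Measure.restrict_apply (hg hs), Measure.restrict_apply hs]
  have hset : (fun t : ℝ => Int.fract (t + c)) ⁻¹' s ∩ Set.Ico (0:ℝ) 1 =
      ((fun t : ℝ => t + c) ⁻¹' (s ∩ Set.Ico c 1)) ∪
      ((fun t : ℝ => t + (c - 1)) ⁻¹' (s ∩ Set.Ico 0 c)) := by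
    ext t
    simp only [Set.mem_inter_iff, Set.mem_preimage, Set.mem_union, Set.mem_Ico]
    constructor
    · rintro ⟨hts, ht0, ht1⟩
      by_cases h : t < 1 - c
      · left
        have he : Int.fract (t + c) = t + c := Int.fract_eq_self.2 ⟨by linarith, by linarith⟩
        exact ⟨he ▸ hts, by linarith, by linarith⟩
      · right
        have he : Int.fract (t + c) = t + (c - 1) := by
          have h1 : t + c = (t + (c - 1)) + 1 := by ring
          rw [h1, Int.fract_add_one, Int.fract_eq_self.2 ⟨by linarith, by linarith⟩]
        exact ⟨he ▸ hts, by linarith, by linarith⟩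
    · rintro (⟨hts, h1, h2⟩ | ⟨hts, h1, h2⟩)
      · have he : Int.fract (t + c) = t + c := Int.fract_eq_self.2 ⟨by linarith, by linarith⟩
        exact ⟨by rw [he]; exact hts, by linarith, by linarith⟩
      · have he : Int.fract (t + c) = t + (c - 1) := by
          have h1 : t + c = (t + (c - 1)) + 1 := by ring
          rw [h1, Int.fract_add_one, Int.fract_eq_self.2 ⟨by linarith, by linarith⟩]
        exact ⟨by rw [he]; exact hts, by linarith, by linarith⟩
  rw [hset]
  have hd : Disjoint ((fun t : ℝ => t + c) ⁻¹' (s ∩ Set.Ico c 1))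
      ((fun t : ℝ => t + (c - 1)) ⁻¹' (s ∩ Set.Ico 0 c)) := by
    rw [Set.disjoint_left]
    rintro t ⟨_, h1, h2⟩ ⟨_, h3, h4⟩
    simp only [Set.mem_Ico] at *
    linarith
  rw [measure_union hd ((measurable_add_const _) (hs.inter measurableSet_Ico)),
    measure_preimage_add_right, measure_preimage_add_right,
    ← measure_union ((Set.Ico_disjoint_Ico_same (a := (0:ℝ)) (b := c) (c := 1)).symm.mono
        Set.inter_subset_right Set.inter_subset_right)
      (hs.inter measurableSet_Ico),
    ← Set.inter_union_distrib_left, Set.union_comm (Set.Ico c 1) (Set.Ico 0 c),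
    Set.Ico_union_Ico_eq_Ico hc0 hc1.le]

lemma measurePreserving_fractAdd (c : ℝ) :
    MeasurePreserving (fun t : ℝ => Int.fract (t + c)) μ01 μ01 := by
  have he : (fun t : ℝ => Int.fract (t + c)) = fun t : ℝ => Int.fract (t + Int.fract c) := by
    funext t
    rw [fract_add_fract]
  rw [he]
  exact measurePreserving_fractAdd_core (Int.fract_nonneg c) (Int.fract_lt_one c)

lemma ae_mem_Ico01 : ∀ᵐ t ∂μ01, t ∈ Set.Ico (0:ℝ) 1 := by
  unfold μ01
  exact ae_restrict_mem measurableSet_Ico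

lemma pow_ae (p : ℝ≥0∞) [Fact (1 ≤ p)] (α : ℝ) (φ : ℝ → ℝ)
    (S : Lp ℂ p μ01 →L[ℂ] Lp ℂ p μ01)
    (hS : ∀ f : Lp ℂ p μ01, (S f : ℝ → ℂ) =ᵐ[μ01] fun t => (φ t : ℂ) * f (Int.fract (t + α)))
    (k : ℕ) (f : Lp ℂ p μ01) :
    ((S ^ k) f : ℝ → ℂ) =ᵐ[μ01]
      fun t => (∏ j ∈ Finset.range k, (φ (Int.fract (t + (j:ℝ) * α)) : ℂ)) *
        f (Int.fract (t + (k:ℝ) * α)) := by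
  induction k generalizing f with
  | zero =>
    simp only [pow_zero, ContinuousLinearMap.one_apply, Finset.range_zero, Finset.prod_empty,
      Nat.cast_zero, zero_mul, add_zero, one_mul]
    filter_upwards [ae_mem_Ico01] with t ht
    rw [Int.fract_eq_self.2 ⟨ht.1, ht.2⟩]
  | succ k ih =>
    have hpow : (S ^ (k+1)) f = (S ^ k) (S f) := by
      rw [pow_succ, ContinuousLinearMap.mul_apply]
    have h1 := ih (S f)
    have hmp := measurePreserving_fractAdd ((k:ℝ) * α)
    have h2 := hmp.quasiMeasurePreserving.ae_eq_comp (hS f)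
    rw [hpow]
    filter_upwards [h1, h2] with t ht1 ht2
    simp only [Function.comp_apply] at ht2
    rw [ht1, ht2, Finset.prod_range_succ, fract_fract_add,
      show t + (k:ℝ)*α + α = t + ((k+1:ℕ):ℝ)*α by push_cast; ring]
    ring

end Aux

theorem stmt2 (p : ℝ≥0∞) [Fact (1 ≤ p)] (hp : p ≠ ⊤)
    (α : ℝ) (hα : Irrational α) (hα0 : 0 < α) (hα1 : α < 1)
    (T : Lp ℂ p μ01 →L[ℂ] Lp ℂ p μ01)
    (hT : ∀ f : Lp ℂ p μ01,
      (T f : ℝ → ℂ) =ᵐ[μ01] fun t => (t : ℂ) * f (Int.fract (t + α)))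
    (S : ℕ → Lp ℂ p μ01 →L[ℂ] Lp ℂ p μ01)
    (hS : ∀ n : ℕ, 1 ≤ n → ∀ f : Lp ℂ p μ01,
      (S n f : ℝ → ℂ) =ᵐ[μ01] fun t => (phiTrunc n t : ℂ) * f (Int.fract (t + α))) :
    (∀ n : ℕ, 1 ≤ n → IsNilpotent (S n)) ∧
    Filter.Tendsto (fun n => ‖S n - T‖) Filter.atTop (nhds 0) := by
  constructor
  · -- nilpotency
    intro n hn
    have hε : (0:ℝ) < 1/(n:ℝ) := by
      have : (0:ℝ) < (n:ℝ) := by exact_mod_cast hn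
      positivity
    obtain ⟨m, hm1, hm⟩ := key_orbit hα hε
    refine ⟨m, ?_⟩
    ext f
    rw [ContinuousLinearMap.zero_apply]
    have h := pow_ae p α (phiTrunc n) (S n) (hS n hn) m f
    have hz : (((S n ^ m)) f : ℝ → ℂ) =ᵐ[μ01] 0 := by
      filter_upwards [h, ae_mem_Ico01] with t ht htm
      rw [ht]
      obtain ⟨j, hj, hjε⟩ := hm t htm.1 htm.2
      have hzero : (phiTrunc n (Int.fract (t + (j:ℝ)*α)) : ℂ) = 0 := by
        unfold phiTrunc
        rw [if_neg]
        · norm_num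
        · rintro ⟨h1, _⟩
          linarith
      rw [Finset.prod_eq_zero (Finset.mem_range.2 hj) hzero, zero_mul]
      rfl
    exact hz.trans (Lp.coeFn_zero ℂ p μ01).symm
  · -- norm convergence
    have hb : ∀ n : ℕ, 1 ≤ n → ‖S n - T‖ ≤ 1/(n:ℝ) := by
      intro n hn
      have hn0 : (0:ℝ) < (n:ℝ) := by exact_mod_cast hn
      refine ContinuousLinearMap.opNorm_le_bound _ (by positivity) fun f => ?_
      have hdiff : (((S n - T) f : ℝ → ℂ)) =ᵐ[μ01]
          fun t => ((phiTrunc n t - t : ℝ) : ℂ) * f (Int.fract (t + α)) := by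
        have hsub := Lp.coeFn_sub (S n f) (T f)
        have hrw : (S n - T) f = S n f - T f := rfl
        rw [hrw]
        filter_upwards [hsub, hS n hn f, hT f] with t h3 h4 h5
        rw [h3]
        simp only [Pi.sub_apply]
        rw [h4, h5]
        push_cast
        ring
      have hbound : eLpNorm (((S n - T) f : ℝ → ℂ)) p μ01 ≤
          ENNReal.ofReal (1/(n:ℝ)) * eLpNorm (f : ℝ → ℂ) p μ01 := by
        rw [eLpNorm_congr_ae hdiff]
        have hmono : eLpNorm (fun t => ((phiTrunc n t - t:ℝ):ℂ) * f (Int.fract (t+α))) p μ01 ≤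
            eLpNorm ((1/(n:ℝ)) • fun t => (f : ℝ → ℂ) (Int.fract (t+α))) p μ01 := by
          apply eLpNorm_mono_ae
          filter_upwards [ae_mem_Ico01] with t ht
          simp only [Pi.smul_apply, norm_smul, norm_mul]
          have h1 : ‖((phiTrunc n t - t : ℝ):ℂ)‖ ≤ 1/(n:ℝ) := by
            rw [Complex.norm_real, Real.norm_eq_abs]
            unfold phiTrunc
            split_ifs with hcond
            · simp only [sub_self, abs_zero]
              positivity
            · push_neg at hcond
              rw [zero_sub, abs_neg, abs_of_nonneg ht.1]
              exact le_of_lt (lt_of_not_ge fun hc => absurd (hcond hc) (not_le.2 ht.2))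
          calc ‖((phiTrunc n t - t : ℝ):ℂ)‖ * ‖(f : ℝ → ℂ) (Int.fract (t+α))‖
              ≤ (1/(n:ℝ)) * ‖(f : ℝ → ℂ) (Int.fract (t+α))‖ := by
                apply mul_le_mul_of_nonneg_right h1 (norm_nonneg _)
            _ = ‖(1/(n:ℝ))‖ * ‖(f : ℝ → ℂ) (Int.fract (t+α))‖ := by
                rw [Real.norm_eq_abs, abs_of_nonneg (by positivity)]
        refine hmono.trans ?_
        rw [eLpNorm_const_smul]
        have hcomp : eLpNorm (fun t => (f : ℝ → ℂ) (Int.fract (t+α))) p μ01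
            = eLpNorm (f : ℝ → ℂ) p μ01 :=
          eLpNorm_comp_measurePreserving (Lp.aestronglyMeasurable f)
            (measurePreserving_fractAdd α)
        rw [hcomp]
        apply mul_le_mul_left _ _
        rw [← ofReal_norm_eq_enorm]
        apply ENNReal.ofReal_le_ofReal
        rw [Real.norm_eq_abs, abs_of_nonneg (by positivity)]
      rw [Lp.norm_def, Lp.norm_def]
      have hfin : ENNReal.ofReal (1/(n:ℝ)) * eLpNorm (f : ℝ → ℂ) p μ01 ≠ ⊤ :=
        ENNReal.mul_ne_top ENNReal.ofReal_ne_top (Lp.eLpNorm_ne_top f)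
      calc (eLpNorm (((S n - T) f : ℝ → ℂ)) p μ01).toReal
          ≤ (ENNReal.ofReal (1/(n:ℝ)) * eLpNorm (f : ℝ → ℂ) p μ01).toReal :=
            ENNReal.toReal_mono hfin hbound
        _ = (1/(n:ℝ)) * (eLpNorm (f : ℝ → ℂ) p μ01).toReal := by
            rw [ENNReal.toReal_mul, ENNReal.toReal_ofReal (by positivity)]
    apply squeeze_zero' (Filter.Eventually.of_forall fun n => norm_nonneg _)
      (Filter.eventually_atTop.2 ⟨1, hb⟩) tendsto_one_div_atTop_nhds_zero_nat
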